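/- Let G be a finite metabelian group, K a maximal abelian normal subgroup of G with G/K abelian, and L ≤ K a subgroup such that K/L is cyclic and the G-core of L is trivial. Then the order of K/L equals the exponent of K. -/

import Mathlib

/-- Let `G` be a finite metabelian group, `K` a maximal abelian normal subgroup of `G`
containing the derived subgroup (so `G/K` is abelian), and `L ≤ K` a subgroup such that
`K/L` is cyclic and the `G`-core of `L` is trivial. Then the order of `K/L`
(the relative index of `L` in `K`) equals the exponent of `K`. -/
theorem stmt_8 (G : Type) [Group G] [Finite G]
    (hmeta : ∀ a b : commutator G, a * b = b * a)
    (K : Subgroup G) (hKn : K.Normal)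
    (hKab : ∀ a b : G, a ∈ K → b ∈ K → a * b = b * a)
    (hGK : commutator G ≤ K)
    (hmax : ∀ K' : Subgroup G, K'.Normal →
      (∀ a b : G, a ∈ K' → b ∈ K' → a * b = b * a) → K ≤ K' → K' = K)
    (L : Subgroup G) (hLK : L ≤ K)
    (hcyc : ∃ k ∈ K, ∀ x ∈ K, ∃ m : ℤ, x * (k ^ m)⁻¹ ∈ L)
    (hcore : ∀ N : Subgroup G, N.Normal → N ≤ L → N = ⊥) :
    L.relIndex K = Monoid.exponent K := by
  classical
  obtain ⟨k, hk, hgen⟩ := hcyc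
  set L' : Subgroup K := L.subgroupOf K with hL'
  set n : ℕ := L.relIndex K with hn
  -- the subgroup L' is normal in K since K is abelian
  haveI : L'.Normal := by
    constructor
    intro a ha g
    have : (g * a * g⁻¹ : K) = a := by
      have hc : (g : G) * a = a * g := hKab g a g.2 a.2
      ext
      push_cast
      rw [hc, mul_assoc, mul_inv_cancel, mul_one]
    rwa [this]
  set k' : K := ⟨k, hk⟩
  set q : K ⧸ L' := QuotientGroup.mk k' with hq
  have hqgen : ∀ x : K ⧸ L', x ∈ Subgroup.zpowers q := by
    intro x
    induction x using QuotientGroup.induction_on with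
    | H x =>
      obtain ⟨m, hm⟩ := hgen x x.2
      refine ⟨m, ?_⟩
      show (QuotientGroup.mk (k' ^ m) : K ⧸ L') = QuotientGroup.mk x
      rw [QuotientGroup.eq]
      have hmem : ((k' ^ m)⁻¹ * x : K) ∈ L' := by
        have hcomm : (x : G) * ((k ^ m)⁻¹) = (k ^ m)⁻¹ * x :=
          hKab x ((k ^ m)⁻¹) x.2 (K.inv_mem (K.zpow_mem hk m))
        have : ((k' ^ m)⁻¹ * x : K) = ⟨(k ^ m)⁻¹ * (x : G), by
          exact K.mul_mem (K.inv_mem (K.zpow_mem hk m)) x.2⟩ := by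
          ext; push_cast; rfl
        rw [Subgroup.mem_subgroupOf, this]
        simpa [← hcomm] using hm
      exact hmem
  -- n = card of quotient = orderOf q
  have hcard : Nat.card (K ⧸ L') = n := by rw [hn, Subgroup.relIndex, Subgroup.index]
  have horder : orderOf q = n := by
    rw [orderOf_eq_card_of_forall_mem_zpowers hqgen, hcard]
  -- direction 1 : n ∣ exponent K
  have h1 : n ∣ Monoid.exponent K := by
    rw [← horder]
    exact dvd_trans (orderOf_map_dvd (QuotientGroup.mk' L') k') (Monoid.order_dvd_exponent k')
  -- direction 2 : exponent K ∣ n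
  have hpowL : ∀ y : G, y ∈ K → y ^ n ∈ L := by
    intro y hy
    have : ((⟨y, hy⟩ : K) ^ n) ∈ L' := by
      rw [hn, Subgroup.relIndex]
      exact Subgroup.pow_index_mem L' _
    simpa [hL', Subgroup.mem_subgroupOf] using this
  have h2 : Monoid.exponent K ∣ n := by
    apply Monoid.exponent_dvd_of_forall_pow_eq_one
    intro x
    have hcorex : (x : G) ^ n ∈ L.normalCore := by
      intro b
      have hbx : b * (x : G) * b⁻¹ ∈ K := hKn.conj_mem x x.2 b
      have := hpowL _ hbx
      simpa [mul_pow, conj_pow] using this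
    rw [hcore L.normalCore inferInstance L.normalCore_le] at hcorex
    have : (x : G) ^ n = 1 := hcorex
    ext
    push_cast
    exact this
  exact Nat.dvd_antisymm h1 h2
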